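/- Let λ, ε ∈ ℝ and let f, g : ℂ∖{0} → ℂ be analytic on an open neighbourhood of the closed annulus {z : q ≤ |z| ≤ 1/q}. Then, with ⟨f,g⟩ := (2πi)⁻¹ ∮_{|z|=1} f(z)·conj(g(1/conj(z))) dz/z (positively oriented unit circle), one has: ⟨π_{λ,ε}(K)f, g⟩ = ⟨f, π_{λ,ε}(K)g⟩; ⟨π_{λ,ε}(K⁻¹)f, g⟩ = ⟨f, π_{λ,ε}(K⁻¹)g⟩; ⟨π_{λ,ε}(E)f, g⟩ = −⟨f, π_{λ,ε}(F)g⟩; and ⟨π_{λ,ε}(F)f, g⟩ = −⟨f, π_{λ,ε}(E)g⟩. (These are the adjointness relations ⟨π(X)f,g⟩ = ⟨f,π(X*)g⟩ for the *-structure K* = K, E* = −F, F* = −E.) -/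

import Mathlib

noncomputable section

open Complex ComplexConjugate Metric

/-- `q^{iλ} := exp(iλ · log q)`. -/
def qil (q lam : ℝ) : ℂ := Complex.exp (Complex.I * lam * Real.log q)

/-- the real power `q^a` viewed as a complex number. -/
def qr (q a : ℝ) : ℂ := ((q ^ a : ℝ) : ℂ)

/-- action of `K` in the representation `π_{λ,ε}`. -/
def piK (q : ℝ) (eps : ℝ) (f : ℂ → ℂ) (z : ℂ) : ℂ := qr q eps * f (q * z)

/-- action of `K⁻¹` in the representation `π_{λ,ε}`. -/
def piKinv (q : ℝ) (eps : ℝ) (f : ℂ → ℂ) (z : ℂ) : ℂ := qr q (-eps) * f (z / q)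

/-- action of `E` in the representation `π_{λ,ε}`. -/
def piE (q lam eps : ℝ) (f : ℂ → ℂ) (z : ℂ) : ℂ :=
  z * (qr q (-(1/2) - eps) * (qil q lam)⁻¹ * f (z / q)
      - qr q (1/2 + eps) * qil q lam * f ((q : ℂ) * z)) / ((q : ℂ)⁻¹ - (q : ℂ))

/-- action of `F` in the representation `π_{λ,ε}`. -/
def piF (q lam eps : ℝ) (f : ℂ → ℂ) (z : ℂ) : ℂ :=
  z⁻¹ * (qr q (-(1/2) + eps) * (qil q lam)⁻¹ * f ((q : ℂ) * z)
      - qr q (1/2 - eps) * qil q lam * f (z / q)) / ((q : ℂ)⁻¹ - (q : ℂ))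

/-- the pairing `⟨f,g⟩ = (2πi)⁻¹ ∮_{|z|=1} f(z) conj(g(1/conj z)) dz/z`. -/
def pairing (f g : ℂ → ℂ) : ℂ :=
  (2 * (Real.pi : ℂ) * Complex.I)⁻¹ * ∮ z in C(0, (1:ℝ)), (f z * conj (g ((conj z)⁻¹))) / z

private lemma hasDerivAt_conj_conj' {g : ℂ → ℂ} {c z₀ : ℂ} (h : HasDerivAt g c (conj z₀)) :
    HasDerivAt (fun z => conj (g (conj z))) (conj c) z₀ := by
  rw [hasDerivAt_iff_tendsto_slope] at h ⊢
  have hmap : Filter.Tendsto (fun z : ℂ => conj z) (nhdsWithin z₀ {z₀}ᶜ)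
      (nhdsWithin (conj z₀) {(conj z₀)}ᶜ) := by
    refine Filter.Tendsto.inf (Complex.continuous_conj.tendsto z₀) ?_
    refine Filter.tendsto_principal_principal.2 fun z hz hh => hz ?_
    simpa using congrArg conj hh
  have h2 := (Complex.continuous_conj.tendsto c).comp (h.comp hmap)
  refine h2.congr fun z => ?_
  simp [Function.comp, slope_def_field, map_div₀]

private lemma diff_conj_conj_inv {g : ℂ → ℂ} {z : ℂ} (hz : z ≠ 0)
    (h : DifferentiableAt ℂ g ((conj z)⁻¹)) :
    DifferentiableAt ℂ (fun w => conj (g ((conj w)⁻¹))) z := by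
  have h' : DifferentiableAt ℂ g (conj z⁻¹) := by rwa [map_inv₀]
  have h1 : DifferentiableAt ℂ (fun w => conj (g (conj w))) z⁻¹ :=
    (hasDerivAt_conj_conj' h'.hasDerivAt).differentiableAt
  have h2 := h1.comp z (differentiableAt_inv hz)
  simpa only [Function.comp_def, map_inv₀] using h2

private lemma circle_scale (a : ℝ) (ha : 0 < a) (F : ℂ → ℂ) :
    (∮ z in C(0, (1:ℝ)), F ((a:ℂ) * z) / z) = ∮ z in C(0, a), F z / z := by
  unfold circleIntegral
  refine intervalIntegral.integral_congr fun θ _ => ?_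
  have h1 : circleMap 0 1 θ ≠ 0 := circleMap_ne_center one_ne_zero
  have h2 : circleMap 0 a θ ≠ 0 := circleMap_ne_center ha.ne'
  have key : (a:ℂ) * circleMap 0 1 θ = circleMap 0 a θ := by
    simp [circleMap]
  have gen : ∀ (w X : ℂ), w ≠ 0 → w * I * (X / w) = I * X := fun w X hw => by
    field_simp
  simp only [deriv_circleMap, smul_eq_mul, ← key]
  rw [gen _ _ h1, gen _ _ (by rw [key]; exact h2)]

private lemma circle_annulus (a : ℝ) (ha : 0 < a) (F : ℂ → ℂ)
    (hF : ∀ z : ℂ, min a 1 ≤ ‖z‖ → ‖z‖ ≤ max a 1 →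
      DifferentiableAt ℂ F z) :
    (∮ z in C(0, a), F z / z) = ∮ z in C(0, (1:ℝ)), F z / z := by
  have hmin : 0 < min a 1 := lt_min ha one_pos
  have hd : ∀ z : ℂ, min a 1 ≤ ‖z‖ → ‖z‖ ≤ max a 1 →
      DifferentiableAt ℂ (fun w => F w / w) z := by
    intro z h1 h2
    have hz : z ≠ 0 := by
      intro h; subst h; simp only [norm_zero] at h1; exact absurd h1 (not_le.2 hmin)
    exact (hF z h1 h2).div differentiableAt_id hz
  rcases le_total a 1 with hle | hle
  · refine (circleIntegral_eq_of_differentiable_on_annulus_off_countable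
      (c := 0) (f := fun w => F w / w) (s := ∅) ha hle Set.countable_empty ?_ ?_).symm
    · intro z hz
      simp only [Set.mem_diff, mem_closedBall, mem_ball, dist_zero_right, not_lt,
        ] at hz
      exact ((hd z (by simpa [min_eq_left hle] using hz.2) (by simpa [max_eq_right hle]
        using hz.1)).continuousAt).continuousWithinAt
    · intro z hz
      simp only [Set.mem_diff, Set.mem_empty_iff_false, mem_ball, mem_closedBall,
        dist_zero_right, not_le, not_false_iff, and_true] at hz
      exact hd z (by simpa [min_eq_left hle] using hz.2.le) (by simpa [max_eq_right hle]
        using hz.1.le)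
  · refine circleIntegral_eq_of_differentiable_on_annulus_off_countable
      (c := 0) (f := fun w => F w / w) (s := ∅) one_pos hle Set.countable_empty ?_ ?_
    · intro z hz
      simp only [Set.mem_diff, mem_closedBall, mem_ball, dist_zero_right, not_lt,
        ] at hz
      exact ((hd z (by simpa [min_eq_right hle] using hz.2) (by simpa [max_eq_left hle]
        using hz.1)).continuousAt).continuousWithinAt
    · intro z hz
      simp only [Set.mem_diff, Set.mem_empty_iff_false, mem_ball, mem_closedBall,
        dist_zero_right, not_le, not_false_iff, and_true] at hz
      exact hd z (by simpa [min_eq_right hle] using hz.2.le) (by simpa [max_eq_left hle]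
        using hz.1.le)

private lemma circle_shift (a : ℝ) (ha : 0 < a) (F : ℂ → ℂ)
    (hF : ∀ z : ℂ, min a 1 ≤ ‖z‖ → ‖z‖ ≤ max a 1 →
      DifferentiableAt ℂ F z) :
    (∮ z in C(0, (1:ℝ)), F ((a:ℂ) * z) / z) = ∮ z in C(0, (1:ℝ)), F z / z :=
  (circle_scale a ha F).trans (circle_annulus a ha F hF)

private lemma aux_cancel (z d Y S : ℂ) (hz : z ≠ 0) : z * S / d * Y / z = S * Y / d := by
  calc z * S / d * Y / z = z * (S / d * Y) / z := by ring
    _ = S / d * Y := mul_div_cancel_left₀ _ hz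
    _ = S * Y / d := by ring

private lemma aux_cancel2 (z d Y S : ℂ) : z⁻¹ * S / d * Y / z = S * Y / z ^ 2 / d := by
  simp only [div_eq_mul_inv, mul_inv, pow_two]
  ring

private lemma aux_cancel3 (a z d S : ℂ) (hz : z ≠ 0) : a * (z * S / d) / z = a * S / d := by
  calc a * (z * S / d) / z = z * (a * (S / d)) / z := by ring
    _ = a * (S / d) := mul_div_cancel_left₀ _ hz
    _ = a * S / d := by ring

private lemma aux_cancel4 (a z d S : ℂ) : a * (z⁻¹ * S / d) / z = a * S / z ^ 2 / d := by
  simp only [div_eq_mul_inv, mul_inv, pow_two]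
  ring

set_option maxHeartbeats 1000000 in
theorem stmt1 (q : ℝ) (hq0 : 0 < q) (hq1 : q < 1) (lam eps : ℝ) (f g : ℂ → ℂ)
    (hf : AnalyticOnNhd ℂ f {z : ℂ | q ≤ ‖z‖ ∧ ‖z‖ ≤ q⁻¹})
    (hg : AnalyticOnNhd ℂ g {z : ℂ | q ≤ ‖z‖ ∧ ‖z‖ ≤ q⁻¹}) :
    pairing (piK q eps f) g = pairing f (piK q eps g) ∧
    pairing (piKinv q eps f) g = pairing f (piKinv q eps g) ∧
    pairing (piE q lam eps f) g = -pairing f (piF q lam eps g) ∧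
    pairing (piF q lam eps f) g = -pairing f (piE q lam eps g) := by
  have hq0' : (q:ℂ) ≠ 0 := Complex.ofReal_ne_zero.2 hq0.ne'
  have hqi0 : (0:ℝ) < q⁻¹ := inv_pos.2 hq0
  have hq1' : (1:ℝ) < q⁻¹ := by
    rw [lt_inv_comm₀ one_pos hq0]; simpa using hq1
  have habsq : ‖(q:ℂ)‖ = q := by rw [Complex.norm_real, Real.norm_eq_abs, abs_of_pos hq0]
  have habs_div : ∀ w : ℂ, ‖w / q‖ = ‖w‖ / q := fun w => by
    rw [norm_div, habsq]
  have habs_mul : ∀ w : ℂ, ‖(q:ℂ) * w‖ = q * ‖w‖ := fun w => by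
    rw [norm_mul, habsq]
  have hfd : ∀ w : ℂ, q ≤ ‖w‖ → ‖w‖ ≤ q⁻¹ → DifferentiableAt ℂ f w :=
    fun w h1 h2 => (hf w ⟨h1, h2⟩).differentiableAt
  have hgd : ∀ w : ℂ, q ≤ ‖w‖ → ‖w‖ ≤ q⁻¹ → DifferentiableAt ℂ g w :=
    fun w h1 h2 => (hg w ⟨h1, h2⟩).differentiableAt
  have hGd : ∀ w : ℂ, q ≤ ‖w‖ → ‖w‖ ≤ q⁻¹ →
      DifferentiableAt ℂ (fun z => conj (g ((conj z)⁻¹))) w := by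
    intro w h1 h2
    have hpos : 0 < ‖w‖ := lt_of_lt_of_le hq0 h1
    have hw : w ≠ 0 := by
      intro h; subst h; simp only [norm_zero] at hpos; exact lt_irrefl 0 hpos
    refine diff_conj_conj_inv hw (hgd _ ?_ ?_)
    · rw [norm_inv, Complex.norm_conj]
      nlinarith [mul_inv_cancel₀ hpos.ne', mul_inv_cancel₀ hq0.ne', inv_pos.2 hpos]
    · rw [norm_inv, Complex.norm_conj]
      nlinarith [mul_inv_cancel₀ hpos.ne', mul_inv_cancel₀ hq0.ne', inv_pos.2 hpos]
  -- differentiability kit on the annuli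
  have hDfq : ∀ z : ℂ, q ≤ ‖z‖ → ‖z‖ ≤ 1 →
      DifferentiableAt ℂ (fun w => f (w / (q:ℂ))) z := by
    intro z h1 h2
    have hb1 : q ≤ ‖z / q‖ := by
      rw [habs_div, le_div_iff₀ hq0]; nlinarith
    have hb2 : ‖z / q‖ ≤ q⁻¹ := by
      rw [habs_div, div_le_iff₀ hq0]; nlinarith [mul_inv_cancel₀ hq0.ne']
    have := (hfd _ hb1 hb2).comp z (differentiableAt_fun_id.div_const (q:ℂ))
    simpa only [Function.comp_def] using this
  have hDfm : ∀ z : ℂ, 1 ≤ ‖z‖ → ‖z‖ ≤ q⁻¹ →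
      DifferentiableAt ℂ (fun w => f ((q:ℂ) * w)) z := by
    intro z h1 h2
    have hb1 : q ≤ ‖(q:ℂ) * z‖ := by
      rw [habs_mul]; nlinarith
    have hb2 : ‖(q:ℂ) * z‖ ≤ q⁻¹ := by
      rw [habs_mul]; nlinarith [mul_inv_cancel₀ hq0.ne']
    have := (hfd _ hb1 hb2).comp z ((differentiableAt_fun_id (𝕜 := ℂ)).const_mul (q:ℂ))
    simpa only [Function.comp_def] using this
  have hDGq : ∀ z : ℂ, q ≤ ‖z‖ → ‖z‖ ≤ 1 →
      DifferentiableAt ℂ (fun w => conj (g ((conj (w / (q:ℂ)))⁻¹))) z := by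
    intro z h1 h2
    have hb1 : q ≤ ‖z / q‖ := by
      rw [habs_div, le_div_iff₀ hq0]; nlinarith
    have hb2 : ‖z / q‖ ≤ q⁻¹ := by
      rw [habs_div, div_le_iff₀ hq0]; nlinarith [mul_inv_cancel₀ hq0.ne']
    have := (hGd _ hb1 hb2).comp z (differentiableAt_fun_id.div_const (q:ℂ))
    simpa only [Function.comp_def] using this
  have hDGm : ∀ z : ℂ, 1 ≤ ‖z‖ → ‖z‖ ≤ q⁻¹ →
      DifferentiableAt ℂ (fun w => conj (g ((conj ((q:ℂ) * w))⁻¹))) z := by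
    intro z h1 h2
    have hb1 : q ≤ ‖(q:ℂ) * z‖ := by
      rw [habs_mul]; nlinarith
    have hb2 : ‖(q:ℂ) * z‖ ≤ q⁻¹ := by
      rw [habs_mul]; nlinarith [mul_inv_cancel₀ hq0.ne']
    have := (hGd _ hb1 hb2).comp z ((differentiableAt_fun_id (𝕜 := ℂ)).const_mul (q:ℂ))
    simpa only [Function.comp_def] using this
  have hfq1 : ∀ z : ℂ, q ≤ ‖z‖ → ‖z‖ ≤ 1 → DifferentiableAt ℂ f z :=
    fun z h1 h2 => hfd z h1 (h2.trans hq1'.le)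
  have hf1q : ∀ z : ℂ, 1 ≤ ‖z‖ → ‖z‖ ≤ q⁻¹ → DifferentiableAt ℂ f z :=
    fun z h1 h2 => hfd z (hq1.le.trans h1) h2
  have hGq1 : ∀ z : ℂ, q ≤ ‖z‖ → ‖z‖ ≤ 1 →
      DifferentiableAt ℂ (fun w => conj (g ((conj w)⁻¹))) z :=
    fun z h1 h2 => hGd z h1 (h2.trans hq1'.le)
  have hG1q : ∀ z : ℂ, 1 ≤ ‖z‖ → ‖z‖ ≤ q⁻¹ →
      DifferentiableAt ℂ (fun w => conj (g ((conj w)⁻¹))) z :=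
    fun z h1 h2 => hGd z (hq1.le.trans h1) h2
  have hne : ∀ z : ℂ, q ≤ ‖z‖ → z ≠ 0 := by
    intro z h1 h; subst h; simp only [norm_zero] at h1; linarith
  have hne1 : ∀ z : ℂ, (1:ℝ) ≤ ‖z‖ → z ≠ 0 := by
    intro z h1 h; subst h; simp only [norm_zero] at h1; linarith
  -- min/max normalizations
  have hminq : min q 1 = q := min_eq_left hq1.le
  have hmaxq : max q 1 = 1 := max_eq_right hq1.le
  have hminqi : min q⁻¹ 1 = 1 := min_eq_right hq1'.le
  have hmaxqi : max q⁻¹ 1 = q⁻¹ := max_eq_left hq1'.le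
  have hsphere : ∀ z : ℂ, z ∈ sphere (0:ℂ) 1 → ‖z‖ = 1 := by
    intro z hz
    simpa [mem_sphere_iff_norm] using hz
  -- the six shift identities
  have e1 : (∮ z in C(0,(1:ℝ)), f ((q:ℂ)*z) * conj (g ((conj z)⁻¹)) / z)
      = ∮ z in C(0,(1:ℝ)), f z * conj (g ((conj (z / (q:ℂ)))⁻¹)) / z := by
    have h := circle_shift q hq0 (fun w => f w * conj (g ((conj (w / (q:ℂ)))⁻¹))) ?_
    · rw [← h]
      refine circleIntegral.integral_congr zero_le_one fun z hz => ?_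
      simp only [mul_div_cancel_left₀ _ hq0']
    · intro z h1 h2
      rw [hminq] at h1; rw [hmaxq] at h2
      exact (hfq1 z h1 h2).mul (hDGq z h1 h2)
  have e2 : (∮ z in C(0,(1:ℝ)), f (z / (q:ℂ)) * conj (g ((conj z)⁻¹)) / z)
      = ∮ z in C(0,(1:ℝ)), f z * conj (g ((conj ((q:ℂ) * z))⁻¹)) / z := by
    have h := circle_shift q⁻¹ hqi0 (fun w => f w * conj (g ((conj ((q:ℂ) * w))⁻¹))) ?_
    · rw [← h]
      refine circleIntegral.integral_congr zero_le_one fun z hz => ?_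
      simp only [Complex.ofReal_inv, inv_mul_eq_div,
        show (q:ℂ) * (z / (q:ℂ)) = z by field_simp]
    · intro z h1 h2
      rw [hminqi] at h1; rw [hmaxqi] at h2
      exact (hf1q z h1 h2).mul (hDGm z h1 h2)
  have e3 : (∮ z in C(0,(1:ℝ)), (q:ℂ)⁻¹ * (f (z / (q:ℂ)) * conj (g ((conj z)⁻¹))))
      = ∮ z in C(0,(1:ℝ)), f z * conj (g ((conj ((q:ℂ) * z))⁻¹)) := by
    have h := circle_shift q⁻¹ hqi0
      (fun w => w * (f w * conj (g ((conj ((q:ℂ) * w))⁻¹)))) ?_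
    · calc (∮ z in C(0,(1:ℝ)), (q:ℂ)⁻¹ * (f (z / (q:ℂ)) * conj (g ((conj z)⁻¹))))
          = ∮ z in C(0,(1:ℝ)),
            (((q⁻¹:ℝ):ℂ) * z) * (f (((q⁻¹:ℝ):ℂ) * z) * conj (g ((conj ((q:ℂ) * (((q⁻¹:ℝ):ℂ) * z)))⁻¹))) / z := by
            refine circleIntegral.integral_congr zero_le_one fun z hz => ?_
            have hz0 : z ≠ 0 := hne1 z (hsphere z hz).ge
            simp only [Complex.ofReal_inv, inv_mul_eq_div,
              show (q:ℂ) * (z / (q:ℂ)) = z by field_simp]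
            field_simp
            try ring
            try tauto
        _ = ∮ z in C(0,(1:ℝ)), z * (f z * conj (g ((conj ((q:ℂ) * z))⁻¹))) / z := h
        _ = ∮ z in C(0,(1:ℝ)), f z * conj (g ((conj ((q:ℂ) * z))⁻¹)) := by
            refine circleIntegral.integral_congr zero_le_one fun z hz => ?_
            exact mul_div_cancel_left₀ _ (hne1 z (hsphere z hz).ge)
    · intro z h1 h2
      rw [hminqi] at h1; rw [hmaxqi] at h2
      exact differentiableAt_id.mul ((hf1q z h1 h2).mul (hDGm z h1 h2))
  have e4 : (∮ z in C(0,(1:ℝ)), (q:ℂ) * (f ((q:ℂ) * z) * conj (g ((conj z)⁻¹))))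
      = ∮ z in C(0,(1:ℝ)), f z * conj (g ((conj (z / (q:ℂ)))⁻¹)) := by
    have h := circle_shift q hq0
      (fun w => w * (f w * conj (g ((conj (w / (q:ℂ)))⁻¹)))) ?_
    · calc (∮ z in C(0,(1:ℝ)), (q:ℂ) * (f ((q:ℂ) * z) * conj (g ((conj z)⁻¹))))
          = ∮ z in C(0,(1:ℝ)),
            ((q:ℂ) * z) * (f ((q:ℂ) * z) * conj (g ((conj (((q:ℂ) * z) / (q:ℂ)))⁻¹))) / z := by
            refine circleIntegral.integral_congr zero_le_one fun z hz => ?_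
            have hz0 : z ≠ 0 := hne1 z (hsphere z hz).ge
            simp only [mul_div_cancel_left₀ _ hq0']
            field_simp
            try ring
            try tauto
        _ = ∮ z in C(0,(1:ℝ)), z * (f z * conj (g ((conj (z / (q:ℂ)))⁻¹))) / z := h
        _ = ∮ z in C(0,(1:ℝ)), f z * conj (g ((conj (z / (q:ℂ)))⁻¹)) := by
            refine circleIntegral.integral_congr zero_le_one fun z hz => ?_
            exact mul_div_cancel_left₀ _ (hne1 z (hsphere z hz).ge)
    · intro z h1 h2
      rw [hminq] at h1; rw [hmaxq] at h2
      exact differentiableAt_id.mul ((hfq1 z h1 h2).mul (hDGq z h1 h2))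
  have e5 : (∮ z in C(0,(1:ℝ)), (q:ℂ)⁻¹ * (f ((q:ℂ) * z) * conj (g ((conj z)⁻¹)) / z^2))
      = ∮ z in C(0,(1:ℝ)), f z * conj (g ((conj (z / (q:ℂ)))⁻¹)) / z^2 := by
    have h := circle_shift q hq0
      (fun w => f w * conj (g ((conj (w / (q:ℂ)))⁻¹)) * w⁻¹) ?_
    · calc (∮ z in C(0,(1:ℝ)), (q:ℂ)⁻¹ * (f ((q:ℂ) * z) * conj (g ((conj z)⁻¹)) / z^2))
          = ∮ z in C(0,(1:ℝ)),
            f ((q:ℂ) * z) * conj (g ((conj (((q:ℂ) * z) / (q:ℂ)))⁻¹)) * ((q:ℂ) * z)⁻¹ / z := by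
            refine circleIntegral.integral_congr zero_le_one fun z hz => ?_
            have hz0 : z ≠ 0 := hne1 z (hsphere z hz).ge
            simp only [mul_div_cancel_left₀ _ hq0']
            field_simp
            try ring
            try tauto
        _ = ∮ z in C(0,(1:ℝ)), f z * conj (g ((conj (z / (q:ℂ)))⁻¹)) * z⁻¹ / z := h
        _ = ∮ z in C(0,(1:ℝ)), f z * conj (g ((conj (z / (q:ℂ)))⁻¹)) / z^2 := by
            refine circleIntegral.integral_congr zero_le_one fun z hz => ?_
            have hz0 : z ≠ 0 := hne1 z (hsphere z hz).ge
            field_simp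
            try ring
            try tauto
    · intro z h1 h2
      rw [hminq] at h1; rw [hmaxq] at h2
      exact ((hfq1 z h1 h2).mul (hDGq z h1 h2)).mul
        (differentiableAt_inv (hne z h1))
  have e6 : (∮ z in C(0,(1:ℝ)), (q:ℂ) * (f (z / (q:ℂ)) * conj (g ((conj z)⁻¹)) / z^2))
      = ∮ z in C(0,(1:ℝ)), f z * conj (g ((conj ((q:ℂ) * z))⁻¹)) / z^2 := by
    have h := circle_shift q⁻¹ hqi0
      (fun w => f w * conj (g ((conj ((q:ℂ) * w))⁻¹)) * w⁻¹) ?_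
    · calc (∮ z in C(0,(1:ℝ)), (q:ℂ) * (f (z / (q:ℂ)) * conj (g ((conj z)⁻¹)) / z^2))
          = ∮ z in C(0,(1:ℝ)),
            f (((q⁻¹:ℝ):ℂ) * z) * conj (g ((conj ((q:ℂ) * (((q⁻¹:ℝ):ℂ) * z)))⁻¹)) * (((q⁻¹:ℝ):ℂ) * z)⁻¹ / z := by
            refine circleIntegral.integral_congr zero_le_one fun z hz => ?_
            have hz0 : z ≠ 0 := hne1 z (hsphere z hz).ge
            simp only [Complex.ofReal_inv, inv_mul_eq_div,
              show (q:ℂ) * (z / (q:ℂ)) = z by field_simp]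
            field_simp
            try ring
            try tauto
        _ = ∮ z in C(0,(1:ℝ)), f z * conj (g ((conj ((q:ℂ) * z))⁻¹)) * z⁻¹ / z := h
        _ = ∮ z in C(0,(1:ℝ)), f z * conj (g ((conj ((q:ℂ) * z))⁻¹)) / z^2 := by
            refine circleIntegral.integral_congr zero_le_one fun z hz => ?_
            have hz0 : z ≠ 0 := hne1 z (hsphere z hz).ge
            field_simp
            try ring
            try tauto
    · intro z h1 h2
      rw [hminqi] at h1; rw [hmaxqi] at h2
      exact ((hf1q z h1 h2).mul (hDGm z h1 h2)).mul
        (differentiableAt_inv (hne1 z h1))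
  -- conjugation and power facts
  have hqil0 : qil q lam ≠ 0 := by simp only [qil]; exact Complex.exp_ne_zero _
  have hconj_qil : conj (qil q lam) = (qil q lam)⁻¹ := by
    simp only [qil]
    rw [← Complex.exp_conj, ← Complex.exp_neg]
    congr 1
    simp only [map_mul, Complex.conj_I, Complex.conj_ofReal]
    ring
  have hqr_mul : ∀ a b : ℝ, qr q a * qr q b = qr q (a + b) := fun a b => by
    simp only [qr, ← Complex.ofReal_mul, ← Real.rpow_add hq0]
  have hq_eq : (q:ℂ) = qr q 1 := by simp only [qr, Real.rpow_one]
  have hqinv_eq : (q:ℂ)⁻¹ = qr q (-1) := by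
    simp only [qr, Real.rpow_neg hq0.le, Real.rpow_one, Complex.ofReal_inv]
  have hd0 : ((q:ℂ)⁻¹ - (q:ℂ)) ≠ 0 := by
    have h : ((q:ℂ)⁻¹ - (q:ℂ)) = ((q⁻¹ - q : ℝ) : ℂ) := by push_cast; ring
    rw [h, Complex.ofReal_ne_zero]
    nlinarith
  have hC1 : qr q (-(1/2) - eps) * (qil q lam)⁻¹ * (q:ℂ)
      = qr q (1/2 - eps) * (qil q lam)⁻¹ := by
    rw [hq_eq, mul_right_comm, hqr_mul, show -(1/2:ℝ) - eps + 1 = 1/2 - eps by ring]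
  have hC2 : qr q (1/2 + eps) * qil q lam * (q:ℂ)⁻¹
      = qr q (-(1/2) + eps) * qil q lam := by
    rw [hqinv_eq, mul_right_comm, hqr_mul, show (1/2:ℝ) + eps + (-1) = -(1/2) + eps by ring]
  have hC3 : qr q (-(1/2) + eps) * (qil q lam)⁻¹ * (q:ℂ)
      = qr q (1/2 + eps) * (qil q lam)⁻¹ := by
    rw [hq_eq, mul_right_comm, hqr_mul, show -(1/2:ℝ) + eps + 1 = 1/2 + eps by ring]
  have hC4 : qr q (1/2 - eps) * qil q lam * (q:ℂ)⁻¹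
      = qr q (-(1/2) - eps) * qil q lam := by
    rw [hqinv_eq, mul_right_comm, hqr_mul, show (1/2:ℝ) - eps + (-1) = -(1/2) - eps by ring]
  -- differentiability at points of the unit circle
  have sz0 : ∀ z : ℂ, ‖z‖ = 1 → z ≠ 0 := fun z hz => hne1 z hz.ge
  have sf : ∀ z : ℂ, ‖z‖ = 1 → DifferentiableAt ℂ f z :=
    fun z hz => hfq1 z (by rw [hz]; exact hq1.le) hz.le
  have sfq : ∀ z : ℂ, ‖z‖ = 1 → DifferentiableAt ℂ (fun w => f (w / (q:ℂ))) z :=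
    fun z hz => hDfq z (by rw [hz]; exact hq1.le) hz.le
  have sfm : ∀ z : ℂ, ‖z‖ = 1 → DifferentiableAt ℂ (fun w => f ((q:ℂ) * w)) z :=
    fun z hz => hDfm z hz.ge (hz.le.trans hq1'.le)
  have sG : ∀ z : ℂ, ‖z‖ = 1 →
      DifferentiableAt ℂ (fun w => conj (g ((conj w)⁻¹))) z :=
    fun z hz => hGq1 z (by rw [hz]; exact hq1.le) hz.le
  have sGq : ∀ z : ℂ, ‖z‖ = 1 →
      DifferentiableAt ℂ (fun w => conj (g ((conj (w / (q:ℂ)))⁻¹))) z :=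
    fun z hz => hDGq z (by rw [hz]; exact hq1.le) hz.le
  have sGm : ∀ z : ℂ, ‖z‖ = 1 →
      DifferentiableAt ℂ (fun w => conj (g ((conj ((q:ℂ) * w))⁻¹))) z :=
    fun z hz => hDGm z hz.ge (hz.le.trans hq1'.le)
  have hCI : ∀ (F : ℂ → ℂ), (∀ z : ℂ, ‖z‖ = 1 → DifferentiableAt ℂ F z) →
      CircleIntegrable F 0 1 := by
    intro F h
    refine ContinuousOn.circleIntegrable zero_le_one fun z hz => ?_
    exact ((h z (hsphere z hz)).continuousAt).continuousWithinAt
  -- the K relation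
  have hK : pairing (piK q eps f) g = pairing f (piK q eps g) := by
    unfold pairing
    congr 1
    have step1 : (∮ z in C(0,(1:ℝ)), piK q eps f z * conj (g ((conj z)⁻¹)) / z)
        = ∮ z in C(0,(1:ℝ)), qr q eps • (f ((q:ℂ) * z) * conj (g ((conj z)⁻¹)) / z) :=
      circleIntegral.integral_congr zero_le_one fun z hz => by
        simp only [piK, smul_eq_mul]; ring
    rw [step1, circleIntegral.integral_smul, e1, ← circleIntegral.integral_smul]
    refine circleIntegral.integral_congr zero_le_one fun z hz => ?_
    have harg1 : (q:ℂ) * (conj z)⁻¹ = (conj (z / (q:ℂ)))⁻¹ := by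
      rw [map_div₀, Complex.conj_ofReal, inv_div, div_eq_mul_inv]
    simp only [piK, smul_eq_mul, map_mul, harg1, qr, Complex.conj_ofReal]
    ring
  -- the K⁻¹ relation
  have hKinv : pairing (piKinv q eps f) g = pairing f (piKinv q eps g) := by
    unfold pairing
    congr 1
    have step1 : (∮ z in C(0,(1:ℝ)), piKinv q eps f z * conj (g ((conj z)⁻¹)) / z)
        = ∮ z in C(0,(1:ℝ)), qr q (-eps) • (f (z / (q:ℂ)) * conj (g ((conj z)⁻¹)) / z) :=
      circleIntegral.integral_congr zero_le_one fun z hz => by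
        simp only [piKinv, smul_eq_mul]; ring
    rw [step1, circleIntegral.integral_smul, e2, ← circleIntegral.integral_smul]
    refine circleIntegral.integral_congr zero_le_one fun z hz => ?_
    have harg2 : (conj z)⁻¹ / (q:ℂ) = (conj ((q:ℂ) * z))⁻¹ := by
      rw [map_mul, Complex.conj_ofReal, mul_inv, div_eq_mul_inv, mul_comm]
    simp only [piKinv, smul_eq_mul, map_mul, harg2, qr, Complex.conj_ofReal]
    ring
  -- rescaled shift identities
  have e3' : (∮ z in C(0,(1:ℝ)), f (z / (q:ℂ)) * conj (g ((conj z)⁻¹)))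
      = (q:ℂ) * ∮ z in C(0,(1:ℝ)), f z * conj (g ((conj ((q:ℂ) * z))⁻¹)) := by
    have hs := circleIntegral.integral_smul ((q:ℂ)⁻¹)
      (fun z => f (z / (q:ℂ)) * conj (g ((conj z)⁻¹))) 0 1
    simp only [smul_eq_mul] at hs
    rw [hs] at e3
    rw [← e3]
    field_simp
  have e4' : (∮ z in C(0,(1:ℝ)), f ((q:ℂ) * z) * conj (g ((conj z)⁻¹)))
      = (q:ℂ)⁻¹ * ∮ z in C(0,(1:ℝ)), f z * conj (g ((conj (z / (q:ℂ)))⁻¹)) := by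
    have hs := circleIntegral.integral_smul ((q:ℂ))
      (fun z => f ((q:ℂ) * z) * conj (g ((conj z)⁻¹))) 0 1
    simp only [smul_eq_mul] at hs
    rw [hs] at e4
    rw [← e4]
    field_simp
  have e5' : (∮ z in C(0,(1:ℝ)), f ((q:ℂ) * z) * conj (g ((conj z)⁻¹)) / z ^ 2)
      = (q:ℂ) * ∮ z in C(0,(1:ℝ)), f z * conj (g ((conj (z / (q:ℂ)))⁻¹)) / z ^ 2 := by
    have hs := circleIntegral.integral_smul ((q:ℂ)⁻¹)
      (fun z => f ((q:ℂ) * z) * conj (g ((conj z)⁻¹)) / z ^ 2) 0 1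
    simp only [smul_eq_mul] at hs
    rw [hs] at e5
    rw [← e5]
    field_simp
  have e6' : (∮ z in C(0,(1:ℝ)), f (z / (q:ℂ)) * conj (g ((conj z)⁻¹)) / z ^ 2)
      = (q:ℂ)⁻¹ * ∮ z in C(0,(1:ℝ)), f z * conj (g ((conj ((q:ℂ) * z))⁻¹)) / z ^ 2 := by
    have hs := circleIntegral.integral_smul ((q:ℂ))
      (fun z => f (z / (q:ℂ)) * conj (g ((conj z)⁻¹)) / z ^ 2) 0 1
    simp only [smul_eq_mul] at hs
    rw [hs] at e6
    rw [← e6]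
    field_simp
  -- the E relation
  have hInt1 : CircleIntegrable (fun z =>
      ((((q:ℂ)⁻¹ - q)⁻¹ * (qr q (-(1/2) - eps) * (qil q lam)⁻¹)) •
        (f (z / (q:ℂ)) * conj (g ((conj z)⁻¹))))) 0 1 :=
    hCI _ fun z hz => (((sfq z hz).fun_mul (sG z hz)).fun_const_smul _)
  have hInt2 : CircleIntegrable (fun z =>
      ((((q:ℂ)⁻¹ - q)⁻¹ * (qr q (1/2 + eps) * qil q lam)) •
        (f ((q:ℂ) * z) * conj (g ((conj z)⁻¹))))) 0 1 :=
    hCI _ fun z hz => (((sfm z hz).fun_mul (sG z hz)).fun_const_smul _)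
  have hInt3 : CircleIntegrable (fun z =>
      ((((q:ℂ)⁻¹ - q)⁻¹ * (qr q (-(1/2) + eps) * qil q lam)) •
        (f z * conj (g ((conj (z / (q:ℂ)))⁻¹))))) 0 1 :=
    hCI _ fun z hz => (((sf z hz).fun_mul (sGq z hz)).fun_const_smul _)
  have hInt4 : CircleIntegrable (fun z =>
      ((((q:ℂ)⁻¹ - q)⁻¹ * (qr q (1/2 - eps) * (qil q lam)⁻¹)) •
        (f z * conj (g ((conj ((q:ℂ) * z))⁻¹))))) 0 1 :=
    hCI _ fun z hz => (((sf z hz).fun_mul (sGm z hz)).fun_const_smul _)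
  have hE : pairing (piE q lam eps f) g = -pairing f (piF q lam eps g) := by
    unfold pairing
    rw [← mul_neg]
    congr 1
    have step1 : (∮ z in C(0,(1:ℝ)), piE q lam eps f z * conj (g ((conj z)⁻¹)) / z)
        = ∮ z in C(0,(1:ℝ)),
          ((((q:ℂ)⁻¹ - q)⁻¹ * (qr q (-(1/2) - eps) * (qil q lam)⁻¹)) •
              (f (z / (q:ℂ)) * conj (g ((conj z)⁻¹)))
            - (((q:ℂ)⁻¹ - q)⁻¹ * (qr q (1/2 + eps) * qil q lam)) •
              (f ((q:ℂ) * z) * conj (g ((conj z)⁻¹)))) :=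
      circleIntegral.integral_congr zero_le_one fun z hz => by
        have hz0 : z ≠ 0 := hne1 z (hsphere z hz).ge
        simp only [piE, smul_eq_mul]
        rw [aux_cancel z _ _ _ hz0]
        ring
    have step2 : (∮ z in C(0,(1:ℝ)), f z * conj (piF q lam eps g ((conj z)⁻¹)) / z)
        = ∮ z in C(0,(1:ℝ)),
          ((((q:ℂ)⁻¹ - q)⁻¹ * (qr q (-(1/2) + eps) * qil q lam)) •
              (f z * conj (g ((conj (z / (q:ℂ)))⁻¹)))
            - (((q:ℂ)⁻¹ - q)⁻¹ * (qr q (1/2 - eps) * (qil q lam)⁻¹)) •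
              (f z * conj (g ((conj ((q:ℂ) * z))⁻¹)))) :=
      circleIntegral.integral_congr zero_le_one fun z hz => by
        have hz0 : z ≠ 0 := hne1 z (hsphere z hz).ge
        have harg1 : (q:ℂ) * (conj z)⁻¹ = (conj (z / (q:ℂ)))⁻¹ := by
          rw [map_div₀, Complex.conj_ofReal, inv_div, div_eq_mul_inv]
        have harg2 : (conj z)⁻¹ / (q:ℂ) = (conj ((q:ℂ) * z))⁻¹ := by
          rw [map_mul, Complex.conj_ofReal, mul_inv, div_eq_mul_inv, mul_comm]
        simp only [piF, smul_eq_mul, map_div₀, map_sub, map_mul, map_inv₀, harg1, harg2,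
          Complex.conj_conj, Complex.conj_ofReal, hconj_qil, inv_inv, qr]
        rw [aux_cancel3 (f z) z _ _ hz0]
        ring
    rw [step1, circleIntegral.integral_sub hInt1 hInt2, circleIntegral.integral_smul,
      circleIntegral.integral_smul, e3', e4', step2,
      circleIntegral.integral_sub hInt3 hInt4, circleIntegral.integral_smul,
      circleIntegral.integral_smul, smul_eq_mul, smul_eq_mul, smul_eq_mul, smul_eq_mul,
      ← hC1, ← hC2]
    ring
  -- the F relation
  have hJnt1 : CircleIntegrable (fun z =>
      ((((q:ℂ)⁻¹ - q)⁻¹ * (qr q (-(1/2) + eps) * (qil q lam)⁻¹)) •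
        (f ((q:ℂ) * z) * conj (g ((conj z)⁻¹)) / z ^ 2))) 0 1 :=
    hCI _ fun z hz => ((((sfm z hz).fun_mul (sG z hz)).fun_div (differentiableAt_pow 2)
      (pow_ne_zero 2 (sz0 z hz))).fun_const_smul _)
  have hJnt2 : CircleIntegrable (fun z =>
      ((((q:ℂ)⁻¹ - q)⁻¹ * (qr q (1/2 - eps) * qil q lam)) •
        (f (z / (q:ℂ)) * conj (g ((conj z)⁻¹)) / z ^ 2))) 0 1 :=
    hCI _ fun z hz => ((((sfq z hz).fun_mul (sG z hz)).fun_div (differentiableAt_pow 2)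
      (pow_ne_zero 2 (sz0 z hz))).fun_const_smul _)
  have hJnt3 : CircleIntegrable (fun z =>
      ((((q:ℂ)⁻¹ - q)⁻¹ * (qr q (-(1/2) - eps) * qil q lam)) •
        (f z * conj (g ((conj ((q:ℂ) * z))⁻¹)) / z ^ 2))) 0 1 :=
    hCI _ fun z hz => ((((sf z hz).fun_mul (sGm z hz)).fun_div (differentiableAt_pow 2)
      (pow_ne_zero 2 (sz0 z hz))).fun_const_smul _)
  have hJnt4 : CircleIntegrable (fun z =>
      ((((q:ℂ)⁻¹ - q)⁻¹ * (qr q (1/2 + eps) * (qil q lam)⁻¹)) •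
        (f z * conj (g ((conj (z / (q:ℂ)))⁻¹)) / z ^ 2))) 0 1 :=
    hCI _ fun z hz => ((((sf z hz).fun_mul (sGq z hz)).fun_div (differentiableAt_pow 2)
      (pow_ne_zero 2 (sz0 z hz))).fun_const_smul _)
  have hF : pairing (piF q lam eps f) g = -pairing f (piE q lam eps g) := by
    unfold pairing
    rw [← mul_neg]
    congr 1
    have step1 : (∮ z in C(0,(1:ℝ)), piF q lam eps f z * conj (g ((conj z)⁻¹)) / z)
        = ∮ z in C(0,(1:ℝ)),
          ((((q:ℂ)⁻¹ - q)⁻¹ * (qr q (-(1/2) + eps) * (qil q lam)⁻¹)) •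
              (f ((q:ℂ) * z) * conj (g ((conj z)⁻¹)) / z ^ 2)
            - (((q:ℂ)⁻¹ - q)⁻¹ * (qr q (1/2 - eps) * qil q lam)) •
              (f (z / (q:ℂ)) * conj (g ((conj z)⁻¹)) / z ^ 2)) :=
      circleIntegral.integral_congr zero_le_one fun z hz => by
        simp only [piF, smul_eq_mul]
        rw [aux_cancel2 z _ _ _]
        ring
    have step2 : (∮ z in C(0,(1:ℝ)), f z * conj (piE q lam eps g ((conj z)⁻¹)) / z)
        = ∮ z in C(0,(1:ℝ)),
          ((((q:ℂ)⁻¹ - q)⁻¹ * (qr q (-(1/2) - eps) * qil q lam)) •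
              (f z * conj (g ((conj ((q:ℂ) * z))⁻¹)) / z ^ 2)
            - (((q:ℂ)⁻¹ - q)⁻¹ * (qr q (1/2 + eps) * (qil q lam)⁻¹)) •
              (f z * conj (g ((conj (z / (q:ℂ)))⁻¹)) / z ^ 2)) :=
      circleIntegral.integral_congr zero_le_one fun z hz => by
        have harg1 : (q:ℂ) * (conj z)⁻¹ = (conj (z / (q:ℂ)))⁻¹ := by
          rw [map_div₀, Complex.conj_ofReal, inv_div, div_eq_mul_inv]
        have harg2 : (conj z)⁻¹ / (q:ℂ) = (conj ((q:ℂ) * z))⁻¹ := by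
          rw [map_mul, Complex.conj_ofReal, mul_inv, div_eq_mul_inv, mul_comm]
        simp only [piE, smul_eq_mul, map_div₀, map_sub, map_mul, map_inv₀, harg1, harg2,
          Complex.conj_conj, Complex.conj_ofReal, hconj_qil, inv_inv, qr]
        rw [aux_cancel4 (f z) z _ _]
        ring
    rw [step1, circleIntegral.integral_sub hJnt1 hJnt2, circleIntegral.integral_smul,
      circleIntegral.integral_smul, e5', e6', step2,
      circleIntegral.integral_sub hJnt3 hJnt4, circleIntegral.integral_smul,
      circleIntegral.integral_smul, smul_eq_mul, smul_eq_mul, smul_eq_mul, smul_eq_mul,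
      ← hC3, ← hC4]
    ring
  exact ⟨hK, hKinv, hE, hF⟩

end
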